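/- Suppose A_i, B_i, C_i ∈ M_{n_i}(ℂ) are positive semidefinite for 1 ≤ i ≤ k. Then the Kronecker product satisfies ⊗_{i=1}^k (A_i+B_i+C_i) + ⊗_{i=1}^k A_i + ⊗_{i=1}^k B_i + ⊗_{i=1}^k C_i ≥ ⊗_{i=1}^k (A_i+B_i) + ⊗_{i=1}^k (A_i+C_i) + ⊗_{i=1}^k (B_i+C_i) in the Loewner order. -/

import Mathlib

open ComplexOrder

/-- The Kronecker (tensor) product `⊗_{i=1}^k M_i` of a family of square matrices. -/
def famKron {k : ℕ} {n : Fin k → ℕ} (M : ∀ i, Matrix (Fin (n i)) (Fin (n i)) ℂ) :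
    Matrix (∀ i, Fin (n i)) (∀ i, Fin (n i)) ℂ :=
  fun x y => ∏ i, M i (x i) (y i)

lemma famKron_expand {k : ℕ} {n : Fin k → ℕ}
    (g : Fin 3 → ∀ i, Matrix (Fin (n i)) (Fin (n i)) ℂ) (s : Finset (Fin 3)) :
    famKron (fun i => ∑ t ∈ s, g t i) =
      ∑ f ∈ Fintype.piFinset (fun _ : Fin k => s), famKron (fun i => g (f i) i) := by
  funext x y
  simp only [famKron, Matrix.sum_apply]
  rw [← Finset.sum_prod_piFinset]

open MatrixOrder Matrix in
lemma psd_eq_conjTranspose_mul_self {m : ℕ} {M : Matrix (Fin m) (Fin m) ℂ} (h : M.PosSemidef) :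
    ∃ N : Matrix (Fin m) (Fin m) ℂ, M = Nᴴ * N := by
  obtain ⟨X, hX, -, hXX⟩ :=
        CFC.exists_sqrt_of_isSelfAdjoint_of_quasispectrumRestricts h.isHermitian
          (QuasispectrumRestricts.nnreal_of_nonneg (Matrix.nonneg_iff_posSemidef.mpr h))
  refine ⟨X, ?_⟩
  rw [← hXX, ← Matrix.star_eq_conjTranspose, hX.star_eq]

open Matrix in
lemma famKron_posSemidef {k : ℕ} {n : Fin k → ℕ}
    (M : ∀ i, Matrix (Fin (n i)) (Fin (n i)) ℂ) (hM : ∀ i, (M i).PosSemidef) :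
    (famKron M).PosSemidef := by
  choose N hN using fun i => psd_eq_conjTranspose_mul_self (hM i)
  have : famKron M = (famKron N)ᴴ * famKron N := by
    funext x y
    simp only [famKron, Matrix.mul_apply, Matrix.conjTranspose_apply]
    calc ∏ i, M i (x i) (y i)
        = ∏ i, ∑ z : Fin (n i), (starRingEnd ℂ) (N i z (x i)) * N i z (y i) := by
          refine Finset.prod_congr rfl fun i _ => ?_
          rw [hN i]
          simp [Matrix.mul_apply, Matrix.conjTranspose_apply]
      _ = ∑ z ∈ Fintype.piFinset (fun i => (Finset.univ : Finset (Fin (n i)))),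
            ∏ i, (starRingEnd ℂ) (N i (z i) (x i)) * N i (z i) (y i) := by
          rw [Finset.prod_univ_sum]
      _ = ∑ z : ∀ i, Fin (n i),
            (starRingEnd ℂ) (∏ i, N i (z i) (x i)) * ∏ i, N i (z i) (y i) := by
          rw [Fintype.piFinset_univ]
          refine Finset.sum_congr rfl fun z _ => ?_
          rw [Finset.prod_mul_distrib, map_prod]
  rw [this]
  exact Matrix.posSemidef_conjTranspose_mul_self _

lemma posSemidef_sum {m : Type*} [Fintype m] {ι : Type*} (s : Finset ι)
    (X : ι → Matrix m m ℂ) (hX : ∀ f ∈ s, (X f).PosSemidef) :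
    (∑ f ∈ s, X f).PosSemidef := by
  classical
  induction s using Finset.induction with
  | empty => simpa using Matrix.PosSemidef.zero
  | insert _ _ h ih =>
    rw [Finset.sum_insert h]
    exact (hX _ (Finset.mem_insert_self _ _)).add
      (ih fun f hf => hX f (Finset.mem_insert_of_mem hf))

theorem stmt_18 {k : ℕ} {n : Fin k → ℕ}
    (A B C : ∀ i, Matrix (Fin (n i)) (Fin (n i)) ℂ)
    (hA : ∀ i, (A i).PosSemidef) (hB : ∀ i, (B i).PosSemidef)
    (hC : ∀ i, (C i).PosSemidef) :
    (famKron (fun i => A i + B i + C i) + famKron A + famKron B + famKron C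
      - famKron (fun i => A i + B i) - famKron (fun i => A i + C i)
      - famKron (fun i => B i + C i)).PosSemidef := by
  classical
  set g : Fin 3 → ∀ i, Matrix (Fin (n i)) (Fin (n i)) ℂ := ![A, B, C] with hg
  set T : (Fin k → Fin 3) → Matrix (∀ i, Fin (n i)) (∀ i, Fin (n i)) ℂ :=
    fun f => famKron (fun i => g (f i) i) with hT
  have hgpsd : ∀ t : Fin 3, ∀ i, (g t i).PosSemidef := by
    intro t i
    fin_cases t
    · exact hA i
    · exact hB i
    · exact hC i
  have hTpsd : ∀ f : Fin k → Fin 3, (T f).PosSemidef :=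
    fun f => famKron_posSemidef _ fun i => hgpsd (f i) i
  -- expansion of each famKron term
  have key : ∀ s : Finset (Fin 3), ∀ D : ∀ i, Matrix (Fin (n i)) (Fin (n i)) ℂ,
      (∀ i, ∑ t ∈ s, g t i = D i) →
      famKron D = ∑ f : Fin k → Fin 3, if (∀ i, f i ∈ s) then T f else 0 := by
    intro s D hD
    have hD' : famKron D = ∑ f ∈ Fintype.piFinset (fun _ : Fin k => s), T f := by
      rw [show D = fun i => ∑ t ∈ s, g t i from (funext hD).symm, famKron_expand g s]
    rw [hD']
    symm
    calc ∑ f : Fin k → Fin 3, (if (∀ i, f i ∈ s) then T f else 0)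
        = ∑ f : Fin k → Fin 3,
            (if f ∈ Fintype.piFinset (fun _ : Fin k => s) then T f else 0) := by
          refine Finset.sum_congr rfl fun f _ => ?_
          simp [Fintype.mem_piFinset]
      _ = ∑ f ∈ Finset.univ ∩ Fintype.piFinset (fun _ : Fin k => s), T f :=
          Finset.sum_ite_mem _ _ _
      _ = ∑ f ∈ Fintype.piFinset (fun _ : Fin k => s), T f := by rw [Finset.univ_inter]
  have eABC := key Finset.univ (fun i => A i + B i + C i)
    (fun i => by simp [Fin.sum_univ_three, hg])
  have eA := key {0} A (fun i => by simp [hg])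
  have eB := key {1} B (fun i => by simp [hg])
  have eC := key {2} C (fun i => by simp [hg])
  have h01 : (0 : Fin 3) ≠ 1 := by decide
  have h02 : (0 : Fin 3) ≠ 2 := by decide
  have h12 : (1 : Fin 3) ≠ 2 := by decide
  have eAB := key {0, 1} (fun i => A i + B i)
    (fun i => by rw [Finset.sum_pair h01]; simp [hg])
  have eAC := key {0, 2} (fun i => A i + C i)
    (fun i => by rw [Finset.sum_pair h02]; simp [hg])
  have eBC := key {1, 2} (fun i => B i + C i)
    (fun i => by rw [Finset.sum_pair h12]; simp [hg])
  rw [eABC, eA, eB, eC, eAB, eAC, eBC]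
  rw [← Finset.sum_add_distrib, ← Finset.sum_add_distrib, ← Finset.sum_add_distrib,
    ← Finset.sum_sub_distrib, ← Finset.sum_sub_distrib, ← Finset.sum_sub_distrib]
  refine posSemidef_sum _ _ fun f _ => ?_
  by_cases m01 : ∀ i, f i ∈ ({0, 1} : Finset (Fin 3)) <;>
  by_cases m02 : ∀ i, f i ∈ ({0, 2} : Finset (Fin 3)) <;>
  by_cases m12 : ∀ i, f i ∈ ({1, 2} : Finset (Fin 3))
  all_goals {
    first
      | (have m0 : ∀ i, f i ∈ ({0} : Finset (Fin 3)) := by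
          intro i; have a := m01 i; have b := m02 i
          simp only [Finset.mem_insert, Finset.mem_singleton] at *
          omega)
      | (have m0 : ¬ ∀ i, f i ∈ ({0} : Finset (Fin 3)) := by
          intro hm
          first
            | exact m01 fun i => by
                have := hm i
                simp only [Finset.mem_insert, Finset.mem_singleton] at *; omega
            | exact m02 fun i => by
                have := hm i
                simp only [Finset.mem_insert, Finset.mem_singleton] at *; omega)
    first
      | (have m1 : ∀ i, f i ∈ ({1} : Finset (Fin 3)) := by
          intro i; have a := m01 i; have b := m12 i
          simp only [Finset.mem_insert, Finset.mem_singleton] at *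
          omega)
      | (have m1 : ¬ ∀ i, f i ∈ ({1} : Finset (Fin 3)) := by
          intro hm
          first
            | exact m01 fun i => by
                have := hm i
                simp only [Finset.mem_insert, Finset.mem_singleton] at *; omega
            | exact m12 fun i => by
                have := hm i
                simp only [Finset.mem_insert, Finset.mem_singleton] at *; omega)
    first
      | (have m2 : ∀ i, f i ∈ ({2} : Finset (Fin 3)) := by
          intro i; have a := m02 i; have b := m12 i
          simp only [Finset.mem_insert, Finset.mem_singleton] at *
          omega)
      | (have m2 : ¬ ∀ i, f i ∈ ({2} : Finset (Fin 3)) := by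
          intro hm
          first
            | exact m02 fun i => by
                have := hm i
                simp only [Finset.mem_insert, Finset.mem_singleton] at *; omega
            | exact m12 fun i => by
                have := hm i
                simp only [Finset.mem_insert, Finset.mem_singleton] at *; omega)
    simp only [m01, m02, m12, m0, m1, m2, Finset.mem_univ, forall_const, forall_true_iff, if_true, if_false,
      ite_true, ite_false]
    try abel_nf
    first
      | exact hTpsd f
      | exact Matrix.PosSemidef.zero
      | (convert hTpsd f using 1; abel)
      | (convert (Matrix.PosSemidef.zero :
            (0 : Matrix ((i : Fin k) → Fin (n i)) ((i : Fin k) → Fin (n i)) ℂ).PosSemidef)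
            using 1; abel)
      | simpa using hTpsd f
      | simpa using (Matrix.PosSemidef.zero :
          (0 : Matrix ((i : Fin k) → Fin (n i)) ((i : Fin k) → Fin (n i)) ℂ).PosSemidef)
  }
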